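/- Let V be a real vector space with a basis (e_λ)_{λ∈Λ} and a family (φ_λ)_{λ∈Λ} of linear functionals on V such that φ_λ(e_μ) ≥ 0 whenever λ ≠ μ. Define x ≤ y iff every coordinate of x (with respect to the basis) is at most the corresponding coordinate of y, and call v nef if φ_λ(v) ≥ 0 for all λ. If x₁, …, x_r are all nef, then the coordinatewise maximum max{x₁,…,x_r} (the vector whose λ-coordinate is max of the λ-coordinates of the x_i) is also nef. -/

import Mathlib

theorem stmt0 {Λ V : Type*} [AddCommGroup V] [Module ℝ V]
    (B : Module.Basis Λ ℝ V) (φ : Λ → V →ₗ[ℝ] ℝ)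
    (hφ : ∀ l m : Λ, l ≠ m → 0 ≤ φ l (B m))
    (r : ℕ) (x : Fin (r + 1) → V)
    (hx : ∀ i, ∀ l, 0 ≤ φ l (x i))
    (y : V)
    (hy : ∀ l : Λ, B.repr y l =
      Finset.univ.sup' Finset.univ_nonempty (fun i => B.repr (x i) l)) :
    ∀ l, 0 ≤ φ l y := by
  intro l
  obtain ⟨i, -, hi⟩ := Finset.exists_mem_eq_sup' Finset.univ_nonempty
    (fun i => B.repr (x i) l)
  set z := y - x i with hz
  have hrepr : ∀ m, B.repr z m = B.repr y m - B.repr (x i) m := by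
    intro m; simp [hz]
  have hnn : ∀ m, 0 ≤ B.repr z m := by
    intro m
    rw [hrepr, hy]
    simp only [sub_nonneg]
    exact Finset.le_sup' (f := fun j => B.repr (x j) m) (Finset.mem_univ i)
  have hzero : B.repr z l = 0 := by
    rw [hrepr, hy l, hi]
    ring
  have hφz : 0 ≤ φ l z := by
    have hzt : z = Finsupp.linearCombination ℝ B (B.repr z) := (B.linearCombination_repr z).symm
    rw [hzt, Finsupp.linearCombination_apply, Finsupp.sum, map_sum]
    apply Finset.sum_nonneg
    intro m _
    rw [map_smul]
    rcases eq_or_ne l m with h | h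
    · rw [← h, hzero]; simp
    · exact smul_nonneg (hnn m) (hφ l m h)
  have hkey : φ l y = φ l (x i) + φ l z := by
    rw [hz, map_sub]; ring
  rw [hkey]
  exact add_nonneg (hx i l) hφz
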